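/- For every real number μ ≥ 4, the logistic map F_μ maps Λ_μ into itself and the restriction of F_μ to Λ_μ is chaotic; that is, there exists δ > 0 such that for every point x ∈ Λ_μ and every nonempty (relatively) open set V ⊆ Λ_μ there is a point y ∈ V with limsup_{n→∞} |F_μⁿ(x) − F_μⁿ(y)| ≥ δ and liminf_{n→∞} |F_μⁿ(x) − F_μⁿ(y)| = 0. -/

import Mathlib

open Filter

/-- The logistic map `F_μ(x) = μ x (1 - x)`. -/
noncomputable def logisticMap (μ : ℝ) (x : ℝ) : ℝ := μ * x * (1 - x)

/-- `Λ_μ = ⋂ₙ F_μ⁻ⁿ([0,1])`. -/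
noncomputable def logisticLambda (μ : ℝ) : Set ℝ :=
  ⋂ n : ℕ, (logisticMap μ)^[n] ⁻¹' Set.Icc 0 1

section LogChaosDev
open Real
namespace LogChaos

/-- inverse branches -/
noncomputable def g (μ : ℝ) (b : Bool) (t : ℝ) : ℝ :=
  if b then (1 + Real.sqrt (1 - 4 * t / μ)) / 2 else (1 - Real.sqrt (1 - 4 * t / μ)) / 2

noncomputable def hh (x : ℝ) : ℝ := Real.arcsin (2 * x - 1)

variable {μ : ℝ}

lemma sqrt_arg_nonneg (hμ : 4 ≤ μ) {t : ℝ} (ht : t ≤ 1) : 0 ≤ 1 - 4 * t / μ := by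
  have hμ0 : (0:ℝ) < μ := by linarith
  rw [sub_nonneg, div_le_one hμ0]; linarith

lemma sqrt_le_one' (hμ : 4 ≤ μ) {t : ℝ} (ht : 0 ≤ t) :
    Real.sqrt (1 - 4 * t / μ) ≤ 1 := by
  have hμ0 : (0:ℝ) < μ := by linarith
  have : 1 - 4 * t / μ ≤ 1 := by
    have : 0 ≤ 4 * t / μ := by positivity
    linarith
  calc Real.sqrt (1 - 4*t/μ) ≤ Real.sqrt 1 := Real.sqrt_le_sqrt this
    _ = 1 := Real.sqrt_one

lemma g_mem_false (hμ : 4 ≤ μ) {t : ℝ} (ht : 0 ≤ t) :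
    0 ≤ g μ false t ∧ g μ false t ≤ 1/2 := by
  have h1 := sqrt_le_one' hμ ht
  have h0 := Real.sqrt_nonneg (1 - 4 * t / μ)
  constructor <;> simp [g] <;> linarith

lemma g_mem_true (hμ : 4 ≤ μ) {t : ℝ} (ht : 0 ≤ t) :
    1/2 ≤ g μ true t ∧ g μ true t ≤ 1 := by
  have h1 := sqrt_le_one' hμ ht
  have h0 := Real.sqrt_nonneg (1 - 4 * t / μ)
  constructor <;> simp [g] <;> linarith

lemma g_mem (hμ : 4 ≤ μ) {t : ℝ} (ht : 0 ≤ t) (b : Bool) :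
    g μ b t ∈ Set.Icc (0:ℝ) 1 := by
  cases b
  · have := g_mem_false hμ ht; constructor <;> [exact this.1; linarith [this.2]]
  · have := g_mem_true hμ ht; constructor <;> [linarith [this.1]; exact this.2]

lemma F_g (hμ : 4 ≤ μ) {t : ℝ} (ht : 0 ≤ t) (ht1 : t ≤ 1) (b : Bool) :
    logisticMap μ (g μ b t) = t := by
  have hμ0 : (μ:ℝ) ≠ 0 := by intro h; rw [h] at hμ; norm_num at hμ
  have hμ0' : (0:ℝ) < μ := by linarith
  set s := Real.sqrt (1 - 4 * t / μ) with hs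
  have hs2 : s^2 = 1 - 4 * t / μ := Real.sq_sqrt (sqrt_arg_nonneg hμ ht1)
  have key : 4 * t = μ * (1 - s^2) := by
    rw [hs2]; field_simp; ring
  cases b <;> simp only [g, logisticMap, if_true, if_false, Bool.false_eq_true, ← hs] <;>
    linear_combination -key / 4

lemma g_recover_false (hμ : 4 ≤ μ) {x : ℝ} (h0 : 0 ≤ x) (h2 : x ≤ 1/2) :
    g μ false (logisticMap μ x) = x := by
  have hμ0 : (μ:ℝ) ≠ 0 := by intro h; rw [h] at hμ; norm_num at hμ
  have harg : 1 - 4 * (logisticMap μ x) / μ = (1 - 2*x)^2 := by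
    simp only [logisticMap]; field_simp; ring
  have : Real.sqrt (1 - 4 * (logisticMap μ x) / μ) = 1 - 2*x := by
    rw [harg, Real.sqrt_sq (by linarith)]
  simp [g, this]

lemma g_recover_true (hμ : 4 ≤ μ) {x : ℝ} (h0 : 1/2 ≤ x) (h2 : x ≤ 1) :
    g μ true (logisticMap μ x) = x := by
  have hμ0 : (μ:ℝ) ≠ 0 := by intro h; rw [h] at hμ; norm_num at hμ
  have harg : 1 - 4 * (logisticMap μ x) / μ = (2*x - 1)^2 := by
    simp only [logisticMap]; field_simp; ring
  have : Real.sqrt (1 - 4 * (logisticMap μ x) / μ) = 2*x - 1 := by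
    rw [harg, Real.sqrt_sq (by linarith)]
  simp [g, this]

/-- canonical itinerary bit -/
noncomputable def itin (x : ℝ) : Bool := decide ((1:ℝ)/2 ≤ x)

lemma g_recover (hμ : 4 ≤ μ) {x : ℝ} (h0 : 0 ≤ x) (h1 : x ≤ 1) :
    g μ (itin x) (logisticMap μ x) = x := by
  by_cases hx : (1:ℝ)/2 ≤ x
  · have hb : itin x = true := decide_eq_true hx
    rw [hb]; exact g_recover_true hμ hx h1
  · have hb : itin x = false := decide_eq_false hx
    rw [hb]; exact g_recover_false hμ h0 (by linarith [lt_of_not_ge hx])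


lemma hh_cont : Continuous hh :=
  Real.continuous_arcsin.comp (by continuity)

lemma F_cont : Continuous (logisticMap μ) := by
  show Continuous (fun x => μ * x * (1 - x)); continuity

lemma hh_mono : Monotone hh := fun a b hab =>
  Real.monotone_arcsin (by linarith)

lemma hh_bounds (x : ℝ) : hh x ∈ Set.Icc (-(π/2)) (π/2) :=
  ⟨Real.neg_pi_div_two_le_arcsin _, Real.arcsin_le_pi_div_two _⟩

lemma hh_hasDeriv {x : ℝ} (h0 : 0 < x) (h1 : x < 1) :
    HasDerivAt hh (2 / Real.sqrt (1 - (2*x-1)^2)) x := by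
  have hne1 : (2*x - 1) ≠ -1 := by intro h; rw [show (-1:ℝ) = 2*0-1 by ring] at h; nlinarith
  have hne2 : (2*x - 1) ≠ 1 := by intro h; nlinarith
  have hinner : HasDerivAt (fun y : ℝ => 2*y - 1) 2 x := by
    simpa using ((hasDerivAt_id x).const_mul (2:ℝ)).sub_const 1
  have h2 := (Real.hasDerivAt_arcsin hne1 hne2).comp x hinner
  have h3 : HasDerivAt hh (1 / Real.sqrt (1 - (2*x-1)^2) * 2) x := h2
  convert h3 using 1
  ring

lemma F_hasDeriv (x : ℝ) : HasDerivAt (logisticMap μ) (μ*(1 - 2*x)) x := by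
  have h1 : HasDerivAt (fun y : ℝ => μ * y) μ x := by
    simpa using (hasDerivAt_id x).const_mul μ
  have h2 : HasDerivAt (fun y : ℝ => 1 - y) (-1) x := by
    simpa using (hasDerivAt_id x).const_sub 1
  have h3 : HasDerivAt (fun y => μ * y * (1-y)) (μ * (1 - x) + μ * x * -1) x := h1.mul h2
  show HasDerivAt (fun y => μ * y * (1-y)) _ x
  convert h3 using 1
  ring

/-- s1 facts -/
lemma sone_pos {x : ℝ} (h0 : 0 < x) (h1 : x < 1) : 0 < Real.sqrt (1 - (2*x-1)^2) := by
  apply Real.sqrt_pos.2; nlinarith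

lemma sone_sq {x : ℝ} (h0 : 0 < x) (h1 : x < 1) :
    (Real.sqrt (1 - (2*x-1)^2))^2 = 4*(x*(1-x)) := by
  rw [Real.sq_sqrt (by nlinarith)]; ring

/-- Lemma B : `2(w-u) ≤ hh w - hh u` on `[0,1]`. -/
lemma hh_expand_id {u w : ℝ} (hu : 0 ≤ u) (huw : u ≤ w) (hw : w ≤ 1) :
    2*(w - u) ≤ hh w - hh u := by
  have hmono : MonotoneOn (fun x => hh x - 2*x) (Set.Icc (0:ℝ) 1) := by
    apply monotoneOn_of_hasDerivWithinAt_nonneg (f' := fun x => 2 / Real.sqrt (1 - (2*x-1)^2) - 2)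
      (convex_Icc 0 1)
    · exact (hh_cont.sub (by continuity)).continuousOn
    · intro x hx
      rw [interior_Icc] at hx
      exact ((hh_hasDeriv hx.1 hx.2).sub ((hasDerivAt_id x).const_mul 2 |>.congr_deriv
        (by ring))).hasDerivWithinAt
    · intro x hx
      rw [interior_Icc] at hx
      have hs := sone_pos hx.1 hx.2
      have hle : Real.sqrt (1 - (2*x-1)^2) ≤ 1 :=
        Real.sqrt_le_one.2 (by nlinarith)
      have : (2:ℝ) ≤ 2 / Real.sqrt (1 - (2*x-1)^2) := by
        rw [le_div_iff₀ hs]; linarith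
      linarith
  have := hmono ⟨hu, le_trans huw hw⟩ ⟨le_trans hu huw, hw⟩ huw
  dsimp at this; linarith

/-- key square inequality -/
lemma key_sq (hμ : 4 ≤ μ) {x : ℝ} (h0 : 0 < x) (h1 : x < 1)
    (hF0 : 0 < logisticMap μ x) (hF1 : logisticMap μ x < 1) :
    4 * Real.sqrt (1 - (2*(logisticMap μ x)-1)^2)
      ≤ 2*μ*(|1-2*x|) * Real.sqrt (1 - (2*x-1)^2) := by
  have hμ0 : (0:ℝ) < μ := by linarith
  set s1 := Real.sqrt (1 - (2*x-1)^2) with hs1d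
  set s2 := Real.sqrt (1 - (2*(logisticMap μ x)-1)^2) with hs2d
  have hs1 : 0 < s1 := sone_pos h0 h1
  have hs2 : 0 ≤ s2 := Real.sqrt_nonneg _
  have e1 : s1^2 = 4*(x*(1-x)) := sone_sq h0 h1
  have e2 : s2^2 = 4*((μ*x*(1-x))*(1-(μ*x*(1-x)))) := by
    rw [hs2d, Real.sq_sqrt (by simp only [logisticMap] at hF0 hF1 ⊢; nlinarith)]
    simp only [logisticMap]; ring
  have ha : 0 ≤ 2*μ*(|1-2*x|) * s1 := by positivity
  have hb : 0 ≤ 4 * s2 := by positivity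
  have hint : 0 ≤ 16*μ*(x*(1-x))*(μ-4) := by
    have hxx : 0 ≤ x*(1-x) := by nlinarith
    have := mul_nonneg (mul_nonneg (by norm_num : (0:ℝ) ≤ 16) hμ0.le) hxx
    exact mul_nonneg (by nlinarith) (by linarith)
  have habs : (|1-2*x|)^2 = (1-2*x)^2 := sq_abs _
  have hsq : (4*s2)^2 ≤ (2*μ*(|1-2*x|)*s1)^2 := by
    have lhs : (4*s2)^2 = 64*((μ*x*(1-x))*(1-(μ*x*(1-x)))) := by
      rw [mul_pow, e2]; ring
    have rhs : (2*μ*(|1-2*x|)*s1)^2 = 16*(μ^2*((1-2*x)^2*(x*(1-x)))) := by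
      rw [mul_pow, mul_pow, mul_pow, habs, e1]; ring
    rw [lhs, rhs]
    nlinarith [hint]
  calc 4*s2 = Real.sqrt ((4*s2)^2) := (Real.sqrt_sq hb).symm
    _ ≤ Real.sqrt ((2*μ*(|1-2*x|)*s1)^2) := Real.sqrt_le_sqrt hsq
    _ = 2*μ*(|1-2*x|)*s1 := Real.sqrt_sq ha

/-- Lemma A0 : expansion on the left lap. -/
lemma lap0 (hμ : 4 ≤ μ) {u w : ℝ} (hu : 0 ≤ u) (huw : u ≤ w) (hw : w ≤ 1/2)
    (hFw : logisticMap μ w ≤ 1) :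
    2*(hh w - hh u) ≤ hh (logisticMap μ w) - hh (logisticMap μ u) := by
  have hμ0 : (0:ℝ) < μ := by linarith
  rcases eq_or_lt_of_le huw with rfl | hlt
  · simp
  have hmono : MonotoneOn (fun x => hh (logisticMap μ x) - 2 * hh x) (Set.Icc u w) := by
    apply monotoneOn_of_hasDerivWithinAt_nonneg
      (f' := fun x => (2 / Real.sqrt (1 - (2*(logisticMap μ x)-1)^2)) * (μ*(1 - 2*x))
        - 2 * (2 / Real.sqrt (1 - (2*x-1)^2)))
      (convex_Icc u w)
    · exact ((hh_cont.comp F_cont).sub (continuous_const.mul hh_cont)).continuousOn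
    · intro x hx
      rw [interior_Icc] at hx
      have hx0 : 0 < x := lt_of_le_of_lt hu hx.1
      have hx1 : x < 1 := by linarith [hx.2]
      have hF0 : 0 < logisticMap μ x :=
        mul_pos (mul_pos hμ0 hx0) (by linarith)
      have hF1 : logisticMap μ x < 1 := by
        have hpr : 0 < μ*((w-x)*(1-x-w)) :=
          mul_pos hμ0 (mul_pos (by linarith [hx.2]) (by linarith [hx.2]))
        have : logisticMap μ x < logisticMap μ w := by
          simp only [logisticMap]; nlinarith [hpr]
        linarith
      exact (((hh_hasDeriv hF0 hF1).comp x (F_hasDeriv x)).sub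
        ((hh_hasDeriv hx0 hx1).const_mul 2)).hasDerivWithinAt
    · intro x hx
      rw [interior_Icc] at hx
      have hx0 : 0 < x := lt_of_le_of_lt hu hx.1
      have hx1 : x < 1 := by linarith [hx.2]
      have hx12 : x < 1/2 := lt_of_lt_of_le hx.2 hw
      have hF0 : 0 < logisticMap μ x :=
        mul_pos (mul_pos hμ0 hx0) (by linarith)
      have hF1 : logisticMap μ x < 1 := by
        have hpr : 0 < μ*((w-x)*(1-x-w)) :=
          mul_pos hμ0 (mul_pos (by linarith [hx.2]) (by linarith [hx.2]))
        have : logisticMap μ x < logisticMap μ w := by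
          simp only [logisticMap]; nlinarith [hpr]
        linarith
      have key := key_sq hμ hx0 hx1 hF0 hF1
      have habs : (|1-2*x|) = 1-2*x := abs_of_pos (by linarith)
      rw [habs] at key
      have hs1 : 0 < Real.sqrt (1 - (2*x-1)^2) := sone_pos hx0 hx1
      have hs2 : 0 < Real.sqrt (1 - (2*(logisticMap μ x)-1)^2) := sone_pos hF0 hF1
      have hdiv : 4 / Real.sqrt (1 - (2*x-1)^2)
          ≤ 2*μ*(1-2*x) / Real.sqrt (1 - (2*(logisticMap μ x)-1)^2) := by
        rw [div_le_div_iff₀ hs1 hs2]; linarith [key]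
      have hre : (2 / Real.sqrt (1 - (2*(logisticMap μ x)-1)^2)) * (μ*(1 - 2*x))
          = 2*μ*(1-2*x) / Real.sqrt (1 - (2*(logisticMap μ x)-1)^2) := by ring
      have hre2 : 2 * (2 / Real.sqrt (1 - (2*x-1)^2)) = 4 / Real.sqrt (1 - (2*x-1)^2) := by ring
      rw [hre, hre2]; linarith
  have := hmono (Set.left_mem_Icc.2 huw) (Set.right_mem_Icc.2 huw) huw
  dsimp at this; linarith

/-- Lemma A1 : expansion on the right lap. -/
lemma lap1 (hμ : 4 ≤ μ) {u w : ℝ} (hu : 1/2 ≤ u) (huw : u ≤ w) (hw : w ≤ 1)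
    (hFu : logisticMap μ u ≤ 1) :
    2*(hh w - hh u) ≤ hh (logisticMap μ u) - hh (logisticMap μ w) := by
  have hμ0 : (0:ℝ) < μ := by linarith
  rcases eq_or_lt_of_le huw with rfl | hlt
  · simp
  have hanti : AntitoneOn (fun x => hh (logisticMap μ x) + 2 * hh x) (Set.Icc u w) := by
    apply antitoneOn_of_hasDerivWithinAt_nonpos
      (f' := fun x => (2 / Real.sqrt (1 - (2*(logisticMap μ x)-1)^2)) * (μ*(1 - 2*x))
        + 2 * (2 / Real.sqrt (1 - (2*x-1)^2)))
      (convex_Icc u w)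
    · exact ((hh_cont.comp F_cont).add (continuous_const.mul hh_cont)).continuousOn
    · intro x hx
      rw [interior_Icc] at hx
      have hx0 : 0 < x := by linarith [hx.1]
      have hx1 : x < 1 := lt_of_lt_of_le hx.2 hw
      have hF0 : 0 < logisticMap μ x :=
        mul_pos (mul_pos hμ0 hx0) (by linarith)
      have hF1 : logisticMap μ x < 1 := by
        have hpr : 0 < μ*((x-u)*(x+u-1)) :=
          mul_pos hμ0 (mul_pos (by linarith [hx.1]) (by linarith [hx.1]))
        have : logisticMap μ x < logisticMap μ u := by
          simp only [logisticMap]; nlinarith [hpr]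
        linarith
      exact (((hh_hasDeriv hF0 hF1).comp x (F_hasDeriv x)).add
        ((hh_hasDeriv hx0 hx1).const_mul 2)).hasDerivWithinAt
    · intro x hx
      rw [interior_Icc] at hx
      have hx0 : 0 < x := by linarith [hx.1]
      have hx1 : x < 1 := lt_of_lt_of_le hx.2 hw
      have hx12 : 1/2 < x := lt_of_le_of_lt hu hx.1
      have hF0 : 0 < logisticMap μ x :=
        mul_pos (mul_pos hμ0 hx0) (by linarith)
      have hF1 : logisticMap μ x < 1 := by
        have hpr : 0 < μ*((x-u)*(x+u-1)) :=
          mul_pos hμ0 (mul_pos (by linarith [hx.1]) (by linarith [hx.1]))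
        have : logisticMap μ x < logisticMap μ u := by
          simp only [logisticMap]; nlinarith [hpr]
        linarith
      have key := key_sq hμ hx0 hx1 hF0 hF1
      have habs : (|1-2*x|) = 2*x-1 := by
        rw [abs_of_neg (by linarith)]; ring
      rw [habs] at key
      have hs1 : 0 < Real.sqrt (1 - (2*x-1)^2) := sone_pos hx0 hx1
      have hs2 : 0 < Real.sqrt (1 - (2*(logisticMap μ x)-1)^2) := sone_pos hF0 hF1
      have hdiv : 4 / Real.sqrt (1 - (2*x-1)^2)
          ≤ 2*μ*(2*x-1) / Real.sqrt (1 - (2*(logisticMap μ x)-1)^2) := by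
        rw [div_le_div_iff₀ hs1 hs2]; linarith [key]
      have hre : (2 / Real.sqrt (1 - (2*(logisticMap μ x)-1)^2)) * (μ*(1 - 2*x))
          = -(2*μ*(2*x-1) / Real.sqrt (1 - (2*(logisticMap μ x)-1)^2)) := by ring
      have hre2 : 2 * (2 / Real.sqrt (1 - (2*x-1)^2)) = 4 / Real.sqrt (1 - (2*x-1)^2) := by ring
      rw [hre, hre2]; linarith
  have := hanti (Set.left_mem_Icc.2 huw) (Set.right_mem_Icc.2 huw) huw
  dsimp at this; linarith



lemma branch_le (hμ : 4 ≤ μ) {t t' : ℝ} (ht : t ∈ Set.Icc (0:ℝ) 1)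
    (ht' : t' ∈ Set.Icc (0:ℝ) 1) (hle : t ≤ t') (b : Bool) :
    |hh (g μ b t) - hh (g μ b t')| ≤ (hh t' - hh t) / 2 := by
  have hμ0 : (0:ℝ) < μ := by linarith
  have harg : Real.sqrt (1 - 4 * t' / μ) ≤ Real.sqrt (1 - 4 * t / μ) := by
    apply Real.sqrt_le_sqrt
    have h4 : 4 * t / μ ≤ 4 * t' / μ := by
      gcongr
    linarith
  cases b
  · -- left branch, increasing
    set u := g μ false t with hud
    set w := g μ false t' with hwd
    have huw : u ≤ w := by rw [hud, hwd]; simp only [g, if_false, Bool.false_eq_true]; linarith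
    have hu0 : 0 ≤ u := (g_mem_false hμ ht.1).1
    have hw2 : w ≤ 1/2 := (g_mem_false hμ ht'.1).2
    have hFw : logisticMap μ w = t' := F_g hμ ht'.1 ht'.2 false
    have hFu : logisticMap μ u = t := F_g hμ ht.1 ht.2 false
    have hkey := lap0 hμ hu0 huw hw2 (by rw [hFw]; exact ht'.2)
    rw [hFw, hFu] at hkey
    have hm : hh u ≤ hh w := hh_mono huw
    rw [abs_sub_comm, abs_of_nonneg (by linarith)]
    linarith
  · -- right branch, decreasing
    set u := g μ true t' with hud
    set w := g μ true t with hwd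
    have huw : u ≤ w := by rw [hud, hwd]; simp only [g, if_true]; linarith
    have hu0 : 1/2 ≤ u := (g_mem_true hμ ht'.1).1
    have hw2 : w ≤ 1 := (g_mem_true hμ ht.1).2
    have hFw : logisticMap μ w = t := F_g hμ ht.1 ht.2 true
    have hFu : logisticMap μ u = t' := F_g hμ ht'.1 ht'.2 true
    have hkey := lap1 hμ hu0 huw hw2 (by rw [hFu]; exact ht'.2)
    rw [hFw, hFu] at hkey
    have hm : hh u ≤ hh w := hh_mono huw
    rw [abs_of_nonneg (by linarith)]
    linarith

lemma branch_abs (hμ : 4 ≤ μ) {t t' : ℝ} (ht : t ∈ Set.Icc (0:ℝ) 1)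
    (ht' : t' ∈ Set.Icc (0:ℝ) 1) (b : Bool) :
    |hh (g μ b t) - hh (g μ b t')| ≤ |hh t - hh t'| / 2 := by
  rcases le_total t t' with hle | hle
  · have h := branch_le hμ ht ht' hle b
    have he : |hh t - hh t'| = hh t' - hh t := by
      rw [abs_sub_comm]; exact abs_of_nonneg (by linarith [hh_mono hle])
    rw [he]; exact h
  · have h := branch_le hμ ht' ht hle b
    rw [abs_sub_comm] at h
    have he : |hh t - hh t'| = hh t - hh t' := abs_of_nonneg (by linarith [hh_mono hle])
    rw [he]; exact h

/-- the cylinder point: `g_{w 0} (g_{w 1} (... g_{w (k-1)} t))` -/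
noncomputable def cyl (μ : ℝ) : (ℕ → Bool) → ℕ → ℝ → ℝ
  | _, 0, t => t
  | w, (k+1), t => g μ (w 0) (cyl μ (fun i => w (i+1)) k t)

@[simp] lemma cyl_zero (w : ℕ → Bool) (t : ℝ) : cyl μ w 0 t = t := rfl

lemma cyl_succ (w : ℕ → Bool) (k : ℕ) (t : ℝ) :
    cyl μ w (k+1) t = g μ (w 0) (cyl μ (fun i => w (i+1)) k t) := rfl

lemma cyl_mem (hμ : 4 ≤ μ) {t : ℝ} (ht : t ∈ Set.Icc (0:ℝ) 1) :
    ∀ (k : ℕ) (w : ℕ → Bool), cyl μ w k t ∈ Set.Icc (0:ℝ) 1 := by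
  intro k
  induction k with
  | zero => intro w; exact ht
  | succ k ih => intro w; rw [cyl_succ]; exact g_mem hμ (ih _).1 _

lemma cyl_congr {t : ℝ} : ∀ (k : ℕ) (w w' : ℕ → Bool), (∀ i < k, w i = w' i) →
    cyl μ w k t = cyl μ w' k t := by
  intro k
  induction k with
  | zero => intro w w' _; rfl
  | succ k ih =>
    intro w w' hww
    rw [cyl_succ, cyl_succ, hww 0 (Nat.succ_pos k),
      ih (fun i => w (i+1)) (fun i => w' (i+1)) (fun i hi => hww (i+1) (by omega))]

lemma F_cyl (hμ : 4 ≤ μ) {t : ℝ} (ht : t ∈ Set.Icc (0:ℝ) 1) (w : ℕ → Bool) (k : ℕ) :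
    logisticMap μ (cyl μ w (k+1) t) = cyl μ (fun i => w (i+1)) k t := by
  rw [cyl_succ]
  exact F_g hμ (cyl_mem hμ ht k _).1 (cyl_mem hμ ht k _).2 _

lemma iter_cyl (hμ : 4 ≤ μ) {t : ℝ} (ht : t ∈ Set.Icc (0:ℝ) 1) :
    ∀ (j m : ℕ) (w : ℕ → Bool),
      (logisticMap μ)^[j] (cyl μ w (j+m) t) = cyl μ (fun i => w (i+j)) m t := by
  intro j
  induction j with
  | zero =>
    intro m w; simp only [Nat.zero_add, Function.iterate_zero, id_eq]
    exact cyl_congr m w _ (fun i _ => by norm_num)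
  | succ j ih =>
    intro m w
    have he : j + 1 + m = (j + m) + 1 := by omega
    rw [he, Function.iterate_succ_apply, F_cyl hμ ht w (j+m), ih m (fun i => w (i+1))]
    exact cyl_congr m _ _ (fun i _ => by rw [Nat.add_assoc])

lemma hh_cyl_contract (hμ : 4 ≤ μ) {t t' : ℝ} (ht : t ∈ Set.Icc (0:ℝ) 1)
    (ht' : t' ∈ Set.Icc (0:ℝ) 1) :
    ∀ (k : ℕ) (w : ℕ → Bool),
      |hh (cyl μ w k t) - hh (cyl μ w k t')| ≤ |hh t - hh t'| / 2^k := by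
  intro k
  induction k with
  | zero => intro w; simp
  | succ k ih =>
    intro w
    rw [cyl_succ, cyl_succ]
    calc |hh (g μ (w 0) (cyl μ (fun i => w (i+1)) k t))
          - hh (g μ (w 0) (cyl μ (fun i => w (i+1)) k t'))|
        ≤ |hh (cyl μ (fun i => w (i+1)) k t) - hh (cyl μ (fun i => w (i+1)) k t')| / 2 :=
          branch_abs hμ (cyl_mem hμ ht k _) (cyl_mem hμ ht' k _) _
      _ ≤ (|hh t - hh t'| / 2^k) / 2 := by linarith [ih (fun i => w (i+1))]
      _ = |hh t - hh t'| / 2^(k+1) := by rw [pow_succ]; ring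

lemma cyl_dist (hμ : 4 ≤ μ) {t t' : ℝ} (ht : t ∈ Set.Icc (0:ℝ) 1)
    (ht' : t' ∈ Set.Icc (0:ℝ) 1) (k : ℕ) (w : ℕ → Bool) :
    |cyl μ w k t - cyl μ w k t'| ≤ π / 2^(k+1) := by
  set a := cyl μ w k t with had
  set b := cyl μ w k t' with hbd
  have ha : a ∈ Set.Icc (0:ℝ) 1 := cyl_mem hμ ht k w
  have hb : b ∈ Set.Icc (0:ℝ) 1 := cyl_mem hμ ht' k w
  have h2ab : 2 * |a - b| ≤ |hh a - hh b| := by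
    rcases le_total a b with hab | hab
    · have := hh_expand_id ha.1 hab hb.2
      rw [abs_sub_comm, abs_of_nonneg (by linarith), abs_sub_comm,
        abs_of_nonneg (by linarith [hh_mono hab])]
      linarith
    · have := hh_expand_id hb.1 hab ha.2
      rw [abs_of_nonneg (by linarith), abs_of_nonneg (by linarith [hh_mono hab])]
      linarith
  have hπ : |hh t - hh t'| ≤ π := by
    have h1 := hh_bounds t; have h2 := hh_bounds t'
    rw [abs_sub_le_iff]
    constructor <;> [linarith [h1.2, h2.1]; linarith [h2.2, h1.1]]
  have hcontr := hh_cyl_contract hμ ht ht' k w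
  have hpow : (0:ℝ) < 2^k := by positivity
  have : |hh a - hh b| ≤ π / 2^k := by
    calc |hh a - hh b| ≤ |hh t - hh t'| / 2^k := hcontr
      _ ≤ π / 2^k := by gcongr
  rw [pow_succ]
  have h2k : π / (2^k * 2) = (π / 2^k) / 2 := by ring
  rw [h2k]
  linarith

lemma cyl_comp (hμ : 4 ≤ μ) {t : ℝ} (ht : t ∈ Set.Icc (0:ℝ) 1) :
    ∀ (a b : ℕ) (w : ℕ → Bool),
      cyl μ w (a+b) t = cyl μ w a (cyl μ (fun i => w (i+a)) b t) := by
  intro a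
  induction a with
  | zero =>
    intro b w; simp only [Nat.zero_add, cyl_zero]
    exact (cyl_congr b _ w (fun i _ => by norm_num)).symm
  | succ a ih =>
    intro b w
    have he : a + 1 + b = (a + b) + 1 := by omega
    rw [he, cyl_succ, cyl_succ, ih b (fun i => w (i+1)),
      cyl_congr b (fun i => w (i+(a+1))) (fun i => w (i+a+1))
        (fun i _ => congrArg w (by omega))]

lemma g_zero_fix (hμ : 4 ≤ μ) : g μ false 0 = 0 := by
  have hμ0 : (μ:ℝ) ≠ 0 := by intro h; rw [h] at hμ; norm_num at hμ
  simp [g, hμ0]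

lemma g_p_fix (hμ : 4 ≤ μ) : g μ true (1 - 1/μ) = 1 - 1/μ := by
  have hμ0 : (0:ℝ) < μ := by linarith
  have harg : 1 - 4 * (1 - 1/μ) / μ = (1 - 2/μ)^2 := by field_simp; ring
  have hs : Real.sqrt (1 - 4 * (1 - 1/μ) / μ) = 1 - 2/μ := by
    rw [harg, Real.sqrt_sq]
    rw [sub_nonneg]
    rw [div_le_one hμ0]; linarith
  simp only [g, if_true]
  rw [hs]; field_simp; ring

/-- fixed point target for the far blocks -/
noncomputable def fp (μ : ℝ) (b : Bool) : ℝ := if b then 1 - 1/μ else 0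

lemma fp_mem (hμ : 4 ≤ μ) (b : Bool) : fp μ b ∈ Set.Icc (0:ℝ) 1 := by
  have hμ0 : (0:ℝ) < μ := by linarith
  have : 0 < 1/μ := by positivity
  have : 1/μ ≤ 1 := by rw [div_le_one hμ0]; linarith
  cases b
  · simp only [fp, Bool.false_eq_true, if_false]
    constructor <;> norm_num
  · simp only [fp, if_true]
    exact ⟨by linarith, by linarith⟩

lemma g_fp (hμ : 4 ≤ μ) (b : Bool) : g μ b (fp μ b) = fp μ b := by
  cases b
  · simpa [fp] using g_zero_fix hμ
  · simpa [fp] using g_p_fix hμ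

lemma cyl_fp (hμ : 4 ≤ μ) (b : Bool) : ∀ k, cyl μ (fun _ => b) k (fp μ b) = fp μ b := by
  intro k
  induction k with
  | zero => rfl
  | succ k ih =>
    rw [cyl_succ]
    show g μ b (cyl μ (fun _ => b) k (fp μ b)) = fp μ b
    rw [ih, g_fp hμ]


lemma mem_lambda {x : ℝ} :
    x ∈ logisticLambda μ ↔ ∀ n, (logisticMap μ)^[n] x ∈ Set.Icc (0:ℝ) 1 := by
  simp [logisticLambda, Set.mem_iInter, Set.mem_preimage]

lemma lambda_maps : Set.MapsTo (logisticMap μ) (logisticLambda μ) (logisticLambda μ) := by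
  intro x hx
  rw [mem_lambda] at hx ⊢
  intro n
  have := hx (n+1)
  rwa [Function.iterate_succ_apply] at this

lemma fp_lambda (hμ : 4 ≤ μ) (b : Bool) : fp μ b ∈ logisticLambda μ := by
  rw [mem_lambda]
  have hfix : logisticMap μ (fp μ b) = fp μ b := by
    have := F_g hμ (fp_mem hμ b).1 (fp_mem hμ b).2 b
    rw [g_fp hμ b] at this; exact this
  intro n
  rw [Function.iterate_fixed hfix]
  exact fp_mem hμ b

lemma point_rep (hμ : 4 ≤ μ) :
    ∀ (k : ℕ) (x : ℝ), (∀ n, (logisticMap μ)^[n] x ∈ Set.Icc (0:ℝ) 1) →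
    ∀ (w : ℕ → Bool), (∀ j < k, w j = itin ((logisticMap μ)^[j] x)) →
      x = cyl μ w k ((logisticMap μ)^[k] x) := by
  intro k
  induction k with
  | zero => intro x _ w _; simp
  | succ k ih =>
    intro x hx w hw
    have h0 := hx 0
    rw [Function.iterate_zero, id_eq] at h0
    have hx' : ∀ n, (logisticMap μ)^[n] (logisticMap μ x) ∈ Set.Icc (0:ℝ) 1 := fun n => by
      rw [← Function.iterate_succ_apply]; exact hx (n+1)
    have hw' : ∀ j < k, (fun i => w (i+1)) j = itin ((logisticMap μ)^[j] (logisticMap μ x)) := by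
      intro j hj
      rw [← Function.iterate_succ_apply]
      exact hw (j+1) (by omega)
    have hrec : g μ (itin x) (logisticMap μ x) = x := g_recover hμ h0.1 h0.2
    rw [cyl_succ]
    have hkk : (logisticMap μ)^[k+1] x = (logisticMap μ)^[k] (logisticMap μ x) :=
      Function.iterate_succ_apply _ _ _
    rw [hkk, ← ih (logisticMap μ x) hx' (fun i => w (i+1)) hw']
    rw [hw 0 (by omega)]
    simp only [Function.iterate_zero, id_eq]
    exact hrec.symm

lemma g_cont (b : Bool) : Continuous (fun t => g μ b t) := by
  cases b <;> simp only [g, if_true, if_false, Bool.false_eq_true] <;> fun_prop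

/-- point with prescribed itinerary `τ` -/
lemma exists_itin_point (hμ : 4 ≤ μ) (τ : ℕ → Bool) :
    ∃ ζ : ℕ → ℝ,
      (∀ j, ζ j ∈ Set.Icc (0:ℝ) 1) ∧
      (∀ j, logisticMap μ (ζ j) = ζ (j+1)) ∧
      (∀ j l, ζ j = cyl μ (fun i => τ (i+j)) l (ζ (j+l))) := by
  have h01 : (0:ℝ) ∈ Set.Icc (0:ℝ) 1 := by norm_num
  have hπ : (0:ℝ) < π := Real.pi_pos
  have hcau : ∀ j, CauchySeq (fun m => cyl μ (fun i => τ (i+j)) m 0) := by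
    intro j
    apply cauchySeq_of_le_geometric (1/2) (π/2) (by norm_num)
    intro m
    rw [Real.dist_eq]
    have hcomp : cyl μ (fun i => τ (i+j)) (m+1) 0
        = cyl μ (fun i => τ (i+j)) m (cyl μ (fun i => τ (i+m+j)) 1 0) := by
      rw [cyl_comp hμ h01 m 1 (fun i => τ (i+j))]
    rw [hcomp]
    have := cyl_dist hμ h01 (cyl_mem hμ h01 1 (fun i => τ (i+m+j))) m (fun i => τ (i+j))
    calc |cyl μ (fun i => τ (i+j)) m 0 - cyl μ (fun i => τ (i+j)) m _| ≤ π / 2^(m+1) := this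
      _ = π/2 * (1/2)^m := by rw [one_div, inv_pow, pow_succ]; ring
  choose ζ hζ using fun j => cauchySeq_tendsto_of_complete (hcau j)
  have hmem : ∀ j, ζ j ∈ Set.Icc (0:ℝ) 1 := fun j =>
    isClosed_Icc.mem_of_tendsto (hζ j)
      (Filter.Eventually.of_forall fun m => cyl_mem hμ h01 m _)
  have hrel : ∀ j, ζ j = g μ (τ j) (ζ (j+1)) := by
    intro j
    have h1 : Filter.Tendsto (fun m => cyl μ (fun i => τ (i+j)) (m+1) 0) Filter.atTop (nhds (ζ j)) :=
      (hζ j).comp (Filter.tendsto_add_atTop_nat 1)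
    have heq : ∀ m, cyl μ (fun i => τ (i+j)) (m+1) 0
        = g μ (τ j) (cyl μ (fun i => τ (i+(j+1))) m 0) := by
      intro m
      rw [cyl_succ]
      congr 1
      · exact congrArg τ (by omega)
      · exact cyl_congr m _ _ (fun i _ => congrArg τ (by omega))
    rw [funext heq] at h1
    have h2 : Filter.Tendsto (fun m => g μ (τ j) (cyl μ (fun i => τ (i+(j+1))) m 0))
        Filter.atTop (nhds (g μ (τ j) (ζ (j+1)))) :=
      ((g_cont (μ := μ) (τ j)).tendsto _).comp (hζ (j+1))
    exact tendsto_nhds_unique h1 h2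
  have hF : ∀ j, logisticMap μ (ζ j) = ζ (j+1) := by
    intro j
    rw [hrel j]
    exact F_g hμ (hmem (j+1)).1 (hmem (j+1)).2 _
  refine ⟨ζ, hmem, hF, ?_⟩
  intro j l
  induction l generalizing j with
  | zero => simp
  | succ l ih =>
    rw [hrel j, cyl_succ]
    have : ζ (j+1) = cyl μ (fun i => τ (i+(j+1))) l (ζ ((j+1)+l)) := ih (j+1)
    rw [this]
    have harg : (j+1)+l = j+(l+1) := by omega
    rw [harg]
    congr 1
    · exact congrArg τ (by omega)
    · exact cyl_congr l _ _ (fun i _ => congrArg τ (by omega))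

/-- block partial sums : block `i` has length `i+6` (copy part `i+1`, far part `5`) -/
def M : ℕ → ℕ
  | 0 => 0
  | (i+1) => M i + (i + 6)

lemma M_mono : Monotone M := by
  apply monotone_nat_of_le_succ
  intro i
  show M i ≤ M i + (i+6)
  omega

lemma M_ge (i : ℕ) : i ≤ M i := by
  induction i with
  | zero => omega
  | succ i ih => show i + 1 ≤ M i + (i+6); omega

/-- index of the block containing `n` -/
def idx (n : ℕ) : ℕ := Nat.findGreatest (fun i => M i ≤ n) n

lemma idx_le (n : ℕ) : M (idx n) ≤ n :=
  Nat.findGreatest_spec (P := fun i => M i ≤ n) (Nat.zero_le n) (by show M 0 ≤ n; simp [M])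

lemma idx_lt (n : ℕ) : n < M (idx n + 1) := by
  by_contra hcon
  push_neg at hcon
  have h1 : idx n + 1 ≤ n := le_trans (M_ge _) hcon
  have h2 : idx n + 1 ≤ idx n := Nat.le_findGreatest (P := fun i => M i ≤ n) h1 hcon
  omega

lemma idx_eq {i n : ℕ} (h1 : M i ≤ n) (h2 : n < M (i+1)) : idx n = i := by
  have hle : i ≤ idx n := Nat.le_findGreatest (le_trans (M_ge i) h1) h1
  have hlt : ¬ (i + 1 ≤ idx n) := by
    intro hcon
    have := le_trans (M_mono hcon) (idx_le n)
    omega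
  omega

variable {μ : ℝ}

/-- the far-block bit -/
noncomputable def bbit (μ x : ℝ) (k i : ℕ) : Bool :=
  decide ((logisticMap μ)^[k + (M i + i + 1)] x < 1/2)

/-- the itinerary of the shadow point -/
noncomputable def τf (μ x : ℝ) (k : ℕ) (n : ℕ) : Bool :=
  if n < M (idx n) + (idx n + 1) then itin ((logisticMap μ)^[k + n] x) else bbit μ x k (idx n)

lemma τf_copy (x : ℝ) (k : ℕ) {i j : ℕ} (hj : j ≤ i) :
    τf μ x k (M i + j) = itin ((logisticMap μ)^[k + (M i + j)] x) := by
  have hidx : idx (M i + j) = i := idx_eq (by omega) (by show M i + j < M i + (i+6); omega)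
  rw [τf, hidx, if_pos (by omega)]

lemma τf_far (x : ℝ) (k : ℕ) {i j : ℕ} (hj : j < 5) :
    τf μ x k (M i + i + 1 + j) = bbit μ x k i := by
  have hidx : idx (M i + i + 1 + j) = i :=
    idx_eq (by omega) (by show M i + i + 1 + j < M i + (i+6); omega)
  rw [τf, hidx, if_neg (by omega)]

/-- The heart: for every `x ∈ Λ` and `k` there is `z ∈ Λ` whose orbit shadows the
orbit of `F^[k] x` at the times `M i` and stays `1/8`-far at times `M i + i + 1`. -/
lemma key_pair (hμ : 4 ≤ μ) {x : ℝ} (hx : x ∈ logisticLambda μ) (k : ℕ) :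
    ∃ z ∈ logisticLambda μ,
      (∀ i, |(logisticMap μ)^[k + M i] x - (logisticMap μ)^[M i] z| ≤ π/2^(i+2)) ∧
      (∀ i, 1/8 ≤ |(logisticMap μ)^[k + (M i + i + 1)] x
        - (logisticMap μ)^[M i + i + 1] z|) := by
  have hxit : ∀ n, (logisticMap μ)^[n] x ∈ Set.Icc (0:ℝ) 1 := mem_lambda.1 hx
  obtain ⟨ζ, hmem, hF, hrep⟩ := exists_itin_point hμ (τf μ x k)
  have hiter : ∀ m, (logisticMap μ)^[m] (ζ 0) = ζ m := by
    intro m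
    induction m with
    | zero => rfl
    | succ m ih => rw [Function.iterate_succ_apply', ih, hF]
  refine ⟨ζ 0, mem_lambda.2 (fun n => by rw [hiter]; exact hmem n), ?_, ?_⟩
  · -- copy estimate
    intro i
    set A := (logisticMap μ)^[k + M i] x with hA
    have hAit : ∀ n, (logisticMap μ)^[n] A ∈ Set.Icc (0:ℝ) 1 := by
      intro n; rw [hA, ← Function.iterate_add_apply]; exact hxit _
    have hArep : A = cyl μ (fun j => itin ((logisticMap μ)^[j] A)) (i+1)
        ((logisticMap μ)^[i+1] A) :=
      point_rep hμ (i+1) A hAit _ (fun j _ => rfl)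
    have hζrep : ζ (M i) = cyl μ (fun i' => τf μ x k (i' + M i)) (i+1) (ζ (M i + (i+1))) :=
      hrep (M i) (i+1)
    have hwords : ∀ j < i+1, (fun i' => τf μ x k (i' + M i)) j
        = (fun j => itin ((logisticMap μ)^[j] A)) j := by
      intro j hj
      show τf μ x k (j + M i) = itin ((logisticMap μ)^[j] A)
      have h1 : j + M i = M i + j := by omega
      rw [h1, τf_copy x k (by omega : j ≤ i)]
      rw [hA, ← Function.iterate_add_apply,
        show k + (M i + j) = j + (k + M i) from by omega]
    have hζrep2 : ζ (M i) = cyl μ (fun j => itin ((logisticMap μ)^[j] A)) (i+1)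
        (ζ (M i + (i+1))) := by
      rw [hζrep]; exact cyl_congr (i+1) _ _ hwords
    rw [hiter (M i), hArep, hζrep2]
    have := cyl_dist hμ (hAit (i+1)) (hmem (M i + (i+1))) (i+1)
      (fun j => itin ((logisticMap μ)^[j] A))
    calc |cyl μ _ (i+1) ((logisticMap μ)^[i+1] A) - cyl μ _ (i+1) (ζ (M i + (i+1)))|
        ≤ π / 2^(i+1+1) := this
      _ = π / 2^(i+2) := by norm_num
  · -- far estimate
    intro i
    set n0 := M i + i + 1 with hn0
    set b := bbit μ x k i with hb
    set B := (logisticMap μ)^[k + n0] x with hB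
    have hBmem : B ∈ Set.Icc (0:ℝ) 1 := hxit _
    have hζrep : ζ n0 = cyl μ (fun i' => τf μ x k (i' + n0)) 5 (ζ (n0 + 5)) := hrep n0 5
    have hwords : ∀ j < 5, (fun i' => τf μ x k (i' + n0)) j = (fun _ : ℕ => b) j := by
      intro j hj
      show τf μ x k (j + n0) = b
      have h1 : j + n0 = M i + i + 1 + j := by omega
      rw [h1, τf_far x k hj]
    have hζrep2 : ζ n0 = cyl μ (fun _ => b) 5 (ζ (n0 + 5)) := by
      rw [hζrep]; exact cyl_congr 5 _ _ hwords
    have hfp : fp μ b = cyl μ (fun _ => b) 5 (fp μ b) := (cyl_fp hμ b 5).symm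
    have hdist : |ζ n0 - fp μ b| ≤ π / 2^6 := by
      rw [hζrep2, hfp]
      exact cyl_dist hμ (hmem (n0+5)) (fp_mem hμ b) 5 (fun _ => b)
    have hπ4 : π ≤ 4 := Real.pi_le_four
    have h64 : π / 2^6 ≤ (1:ℝ)/16 := by
      rw [div_le_div_iff₀ (by norm_num) (by norm_num)]
      linarith
    have hdist' : |ζ n0 - fp μ b| ≤ 1/16 := hdist.trans h64
    have habs := abs_le.1 hdist'
    rw [hiter n0]
    by_cases hcase : B < 1/2
    · have hbt : b = true := by
        rw [hb, bbit]
        apply decide_eq_true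
        rw [← hn0] at *
        exact hcase
      have hfp34 : (3:ℝ)/4 ≤ fp μ b := by
        rw [hbt]
        show (3:ℝ)/4 ≤ 1 - 1/μ
        have h4 : 1/μ ≤ 1/4 := one_div_le_one_div_of_le (by norm_num) hμ
        linarith
      have h1 : ζ n0 - B ≤ |B - ζ n0| := by rw [abs_sub_comm]; exact le_abs_self _
      linarith [habs.1, habs.2]
    · push_neg at hcase
      have hbf : b = false := by
        rw [hb, bbit]
        apply decide_eq_false
        rw [← hn0]
        exact not_lt.2 hcase
      have hfp0 : fp μ b = 0 := by rw [hbf]; rfl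
      have h1 : B - ζ n0 ≤ |B - ζ n0| := le_abs_self _
      rw [hfp0] at habs
      linarith [habs.1, habs.2]

end LogChaos

end LogChaosDev

open LogChaos Real in
/-- For every `μ ≥ 4`, the logistic map `F_μ` maps `Λ_μ` into itself and its
restriction to `Λ_μ` is chaotic: there exists `δ > 0` such that for every
`x ∈ Λ_μ` and every nonempty relatively open subset `V` of `Λ_μ` there is
`y ∈ V` with `limsup |F_μⁿx - F_μⁿy| ≥ δ` and `liminf |F_μⁿx - F_μⁿy| = 0`. -/
theorem logistic_chaotic_on_lambda (μ : ℝ) (hμ : 4 ≤ μ) :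
    Set.MapsTo (logisticMap μ) (logisticLambda μ) (logisticLambda μ) ∧
    ∃ δ : ℝ, 0 < δ ∧
      ∀ x ∈ logisticLambda μ, ∀ V : Set ℝ, V ⊆ logisticLambda μ →
        (∃ U : Set ℝ, IsOpen U ∧ V = logisticLambda μ ∩ U) → V.Nonempty →
        ∃ y ∈ V,
          δ ≤ limsup (fun n => |(logisticMap μ)^[n] x - (logisticMap μ)^[n] y|) atTop ∧
          liminf (fun n => |(logisticMap μ)^[n] x - (logisticMap μ)^[n] y|) atTop = 0 := by
  classical
  refine ⟨lambda_maps, 1/8, by norm_num, ?_⟩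
  intro x hx V hVsub hVopen hVne
  obtain ⟨U, hUopen, rfl⟩ := hVopen
  obtain ⟨v, hv⟩ := hVne
  have hvΛ : v ∈ logisticLambda μ := hv.1
  have hvU : v ∈ U := hv.2
  obtain ⟨ε, hε, hball⟩ := Metric.isOpen_iff.1 hUopen v hvU
  have hπ : (0:ℝ) < π := Real.pi_pos
  obtain ⟨k, hk⟩ : ∃ k : ℕ, π / 2^(k+1) < ε := by
    obtain ⟨k, hk⟩ := pow_unbounded_of_one_lt (π/ε) (by norm_num : (1:ℝ) < 2)
    refine ⟨k, ?_⟩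
    rw [div_lt_iff₀ hε] at hk
    rw [div_lt_iff₀ (by positivity)]
    have h2 : (2:ℝ)^(k+1) = 2^k * 2 := pow_succ 2 k
    nlinarith [hε, (by positivity : (0:ℝ) < (2:ℝ)^k)]
  obtain ⟨z, hzΛ, hcopy, hfar⟩ := key_pair hμ hx k
  have hvit := mem_lambda.1 hvΛ
  have hzit := mem_lambda.1 hzΛ
  have hxit := mem_lambda.1 hx
  have hz0 : z ∈ Set.Icc (0:ℝ) 1 := by have := hzit 0; simpa using this
  set w : ℕ → Bool := fun j => itin ((logisticMap μ)^[j] v) with hwd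
  set y := cyl μ w k z with hy
  have hk0 : (logisticMap μ)^[k] (cyl μ w k z) = z := by
    have := iter_cyl hμ hz0 k 0 w
    simpa using this
  have hyv : |y - v| ≤ π / 2^(k+1) := by
    have hrep : v = cyl μ w k ((logisticMap μ)^[k] v) :=
      point_rep hμ k v hvit w (fun j _ => rfl)
    have hd := cyl_dist hμ hz0 (hvit k) k w
    rw [← hrep, ← hy] at hd
    exact hd
  have hyΛ : y ∈ logisticLambda μ := by
    rw [mem_lambda]
    intro n
    rcases le_or_gt n k with hnk | hnk
    · have hks : k = n + (k - n) := by omega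
      rw [hy, hks, iter_cyl hμ hz0 n (k-n) w]
      exact cyl_mem hμ hz0 _ _
    · have hks : n = (n - k) + k := by omega
      rw [hy, hks, Function.iterate_add_apply, hk0]
      exact hzit _
  have hyit := mem_lambda.1 hyΛ
  have htail : ∀ m, (logisticMap μ)^[k + m] y = (logisticMap μ)^[m] z := by
    intro m
    rw [show k + m = m + k from by omega, Function.iterate_add_apply, hy, hk0]
  have hbd1 : Filter.IsBoundedUnder (· ≤ ·) Filter.atTop
      (fun n => |(logisticMap μ)^[n] x - (logisticMap μ)^[n] y|) := by
    apply Filter.isBoundedUnder_of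
    refine ⟨1, fun n => ?_⟩
    have h1 := hxit n; have h2 := hyit n
    rw [abs_le]; constructor <;> [linarith [h1.1, h2.2]; linarith [h1.2, h2.1]]
  have hbd0 : Filter.IsBoundedUnder (· ≥ ·) Filter.atTop
      (fun n => |(logisticMap μ)^[n] x - (logisticMap μ)^[n] y|) :=
    Filter.isBoundedUnder_of ⟨0, fun n => abs_nonneg _⟩
  refine ⟨y, ⟨hyΛ, hball (show dist y v < ε by rw [Real.dist_eq]; linarith)⟩, ?_, ?_⟩
  · -- limsup ≥ 1/8
    apply Filter.le_limsup_of_frequently_le _ hbd1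
    rw [Filter.frequently_atTop]
    intro N
    refine ⟨k + (M N + N + 1), by have := M_ge N; omega, ?_⟩
    have := hfar N
    rw [← htail (M N + N + 1)] at this
    exact this
  · -- liminf = 0
    apply le_antisymm
    · by_contra hcon
      push_neg at hcon
      set Lf := liminf (fun n => |(logisticMap μ)^[n] x - (logisticMap μ)^[n] y|) atTop with hLf
      obtain ⟨i, hi⟩ := pow_unbounded_of_one_lt (π/Lf) (by norm_num : (1:ℝ) < 2)
      have hle : Lf ≤ π / 2^(i+2) := by
        apply Filter.liminf_le_of_frequently_le _ hbd0
        rw [Filter.frequently_atTop]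
        intro N
        refine ⟨k + M (max N i), by have := M_ge (max N i); omega, ?_⟩
        have hcj := hcopy (max N i)
        rw [← htail (M (max N i))] at hcj
        calc |(logisticMap μ)^[k + M (max N i)] x - (logisticMap μ)^[k + M (max N i)] y|
            ≤ π / 2^((max N i)+2) := hcj
          _ ≤ π / 2^(i+2) := by
              gcongr
              · norm_num
              · omega
      have h2 : (0:ℝ) < 2^(i+2) := by positivity
      rw [div_lt_iff₀ hcon] at hi
      rw [le_div_iff₀ h2] at hle
      have hpow : (2:ℝ)^(i+2) = 2^i * 4 := by rw [pow_add]; norm_num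
      nlinarith [hcon, (by positivity : (0:ℝ) < (2:ℝ)^i)]
    · apply Filter.le_liminf_of_le
      · exact hbd1.isCoboundedUnder_ge
      · exact Filter.Eventually.of_forall (fun n => abs_nonneg _)
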